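/- Let V be a vector space, u ∈ V nonzero, and (U(V), △_u) the Kantor algebra of bilinear maps on V. The Jacobi subspace J of (U(V), △_u) equals {A ∈ U(V) : A(u,u) = 0}. Moreover U(V) has no nonzero Jacobi ideals: if I is an ideal of (U(V), △_u) contained in J, then I = 0. -/

import Mathlib

/-- `[Φ,B](W,C) = Φ(B(W,C)) − B(Φ(W),C) − B(W,Φ(C))`. -/
def opBr {V : Type*} [AddCommGroup V] (φ : V → V) (B : V → V → V) : V → V → V :=
  fun x y => φ (B x y) - B (φ x) y - B x (φ y)

/-- The Kantor product on the space `U(V)` of bilinear operations on `V`: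
`(A △_u B)(x,y) = A(u,B(x,y)) − B(A(u,x),y) − B(x,A(u,y))`. -/
def kantor {F V : Type*} [Field F] [AddCommGroup V] [Module F V]
    (u : V) (A B : V →ₗ[F] V →ₗ[F] V) : V →ₗ[F] V →ₗ[F] V :=
  LinearMap.mk₂ F (fun x y => A u (B x y) - B (A u x) y - B x (A u y))
    (fun x x' y => by simp only [map_add, LinearMap.add_apply]; abel)
    (fun c x y => by simp only [map_smul, LinearMap.smul_apply, smul_sub])
    (fun x y y' => by simp only [map_add, LinearMap.add_apply]; abel)
    (fun c x y => by simp only [map_smul, LinearMap.smul_apply, smul_sub])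

lemma kantor_key {F V : Type*} [Field F] [AddCommGroup V] [Module F V]
    (u : V) (A W C : V →ₗ[F] V →ₗ[F] V) (x y : V) :
    kantor u A (kantor u W C) x y - kantor u (kantor u A W) C x y
      - kantor u W (kantor u A C) x y
    = W (A u u) (C x y) - C (W (A u u) x) y - C x (W (A u u) y) := by
  simp only [kantor, LinearMap.mk₂_apply, map_sub, LinearMap.sub_apply]
  abel

lemma exists_dual_one {F V : Type*} [Field F] [AddCommGroup V] [Module F V]
    {v : V} (hv : v ≠ 0) : ∃ g : V →ₗ[F] F, g v = 1 := by
  have := (Module.forall_dual_apply_eq_zero_iff F v).not.mpr hv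
  push_neg at this
  obtain ⟨φ, hφ⟩ := this
  exact ⟨(φ v)⁻¹ • φ, by simp [inv_mul_cancel₀ hφ]⟩

/-- The Jacobi subspace of `(U(V), △_u)` is `{A : A(u,u) = 0}`, and `U(V)` has no
nonzero Jacobi ideals. -/
theorem stmt16 {F V : Type*} [Field F] [AddCommGroup V] [Module F V]
    (u : V) (hu : u ≠ 0) :
    ({A : V →ₗ[F] V →ₗ[F] V | ∀ W C : V →ₗ[F] V →ₗ[F] V,
        kantor u A (kantor u W C)
          = kantor u (kantor u A W) C + kantor u W (kantor u A C)}
      = {A : V →ₗ[F] V →ₗ[F] V | A u u = 0}) ∧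
    (∀ I : Set (V →ₗ[F] V →ₗ[F] V),
      (∀ A ∈ I, ∀ B : V →ₗ[F] V →ₗ[F] V, kantor u A B ∈ I ∧ kantor u B A ∈ I) →
      (I ⊆ {A : V →ₗ[F] V →ₗ[F] V | ∀ W C : V →ₗ[F] V →ₗ[F] V,
        kantor u A (kantor u W C)
          = kantor u (kantor u A W) C + kantor u W (kantor u A C)}) →
      ∀ A ∈ I, A = 0) := by
  have hset : ({A : V →ₗ[F] V →ₗ[F] V | ∀ W C : V →ₗ[F] V →ₗ[F] V,
        kantor u A (kantor u W C)
          = kantor u (kantor u A W) C + kantor u W (kantor u A C)}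
      = {A : V →ₗ[F] V →ₗ[F] V | A u u = 0}) := by
    ext A
    simp only [Set.mem_setOf_eq]
    constructor
    · intro h
      by_contra hv
      obtain ⟨g, hg⟩ := exists_dual_one (F := F) hv
      set v := A u u with hvdef
      set W : V →ₗ[F] V →ₗ[F] V := (LinearMap.lsmul F V).comp g with hW
      set C : V →ₗ[F] V →ₗ[F] V := g.smulRight (g.smulRight v) with hC
      have hkey := kantor_key u A W C v v
      have h0 : kantor u A (kantor u W C) v v - kantor u (kantor u A W) C v v
          - kantor u W (kantor u A C) v v = 0 := by
        rw [h W C]; simp only [LinearMap.add_apply]; abel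
      rw [h0] at hkey
      have hWv : ∀ z : V, W v z = z := by
        intro z; simp [hW, hg]
      have hCvv : C v v = v := by simp [hC, hg]
      rw [← hvdef] at hkey
      simp only [hWv, hCvv] at hkey
      have hkey' : v - v - v = 0 := hkey.symm
      rw [sub_self, zero_sub, neg_eq_zero] at hkey'
      exact hv hkey'
    · intro hA W C
      ext x y
      have hkey := kantor_key u A W C x y
      rw [hA] at hkey
      simp only [map_zero, LinearMap.zero_apply, zero_sub, sub_zero] at hkey
      have : kantor u A (kantor u W C) x y
          = kantor u (kantor u A W) C x y + kantor u W (kantor u A C) x y := by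
        rw [sub_sub, sub_eq_zero] at hkey
        simpa using hkey
      simpa [LinearMap.add_apply] using this
  refine ⟨hset, ?_⟩
  intro I hI hsub A hA
  obtain ⟨g, hg⟩ := exists_dual_one (F := F) hu
  have h1 : ∀ M ∈ I, M u u = 0 := by
    intro M hM
    have := hsub hM
    rw [hset] at this
    exact this
  have h2 : ∀ M ∈ I, M u = 0 := by
    intro M hM
    ext y
    set B : V →ₗ[F] V →ₗ[F] V := g.smulRight (g.smulRight y) with hB
    have hmem := (hI M hM B).1
    have := h1 _ hmem
    simp only [kantor, LinearMap.mk₂_apply, h1 M hM, map_zero,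
      LinearMap.zero_apply, sub_zero, zero_sub] at this
    simpa [hB, hg] using this
  ext v y
  set B : V →ₗ[F] V →ₗ[F] V := g.smulRight (g.smulRight v) with hB
  have hmem := (hI A hA B).2
  have hA'u := h2 _ hmem
  have := congrFun (congrArg (fun f => f.toFun) hA'u) y
  simp only [kantor, LinearMap.mk₂_apply] at hA'u
  have hz := LinearMap.congr_fun hA'u y
  simp only [LinearMap.mk₂_apply, LinearMap.zero_apply] at hz
  have hAu : A u = 0 := h2 A hA
  rw [hAu] at hz
  simp only [LinearMap.zero_apply, map_zero, sub_zero, zero_sub] at hz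
  have hBuu : B u u = v := by simp [hB, hg]
  rw [hBuu] at hz
  simpa using hz
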